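/- (Combinatorial core of the singular-support theorem.) Assume quasi-symmetry and μ(ℤ^N) = ℤ^k. For I ⊆ {1,…,N} put A_I = −β_I − C_I + ∇. Let ξ be a nonzero linear functional on ℝ^k, δ ∈ ℝ^k, v ∈ ℤ^k, and let F_ξ = {x∈∇ : ξ(x) = max_{y∈∇} ξ(y)} be the face of ∇ exposed by ξ. Then there exist I, J ⊆ {1,…,N} with δ−v ∈ A_I, δ−v ∈ A_J, {i : ξ(β_i) < 0} ⊆ I ⊆ {i : ξ(β_i) ≤ 0}, and J ⊆ {i : ξ(β_i) ≥ 0}, if and only if δ ∈ v + Aff(F_ξ), the affine hull of F_ξ. -/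

import Mathlib

open Pointwise
open scoped Classical

noncomputable section

/-- The zonotope `∇ = (1/2)∑_i [0, β_i]`. -/
def nabla {N k : ℕ} (β : Fin N → (Fin k → ℝ)) : Set (Fin k → ℝ) :=
  (2⁻¹ : ℝ) • ∑ i : Fin N, segment ℝ 0 (β i)

/-- The convex cone `C_I` generated by `{β_i : i ∈ I}`. -/
def coneI {N k : ℕ} (β : Fin N → (Fin k → ℝ)) (I : Finset (Fin N)) :
    Set (Fin k → ℝ) :=
  {y | ∃ c : Fin N → ℝ, (∀ i, 0 ≤ c i) ∧ (∀ i, i ∉ I → c i = 0) ∧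
    y = ∑ i, c i • β i}

/-- `A_I = −β_I − C_I + ∇`. -/
def AI {N k : ℕ} (β : Fin N → (Fin k → ℝ)) (I : Finset (Fin N)) :
    Set (Fin k → ℝ) :=
  {x | ∃ c ∈ coneI β I, ∃ nn ∈ nabla β, x = -(∑ i ∈ I, β i) - c + nn}

/-- The face `F_ξ` of `∇` exposed by the linear functional `ξ`. -/
def exposedFace {N k : ℕ} (β : Fin N → (Fin k → ℝ))
    (ξ : (Fin k → ℝ) →ₗ[ℝ] ℝ) : Set (Fin k → ℝ) :=
  {x ∈ nabla β | ∀ y ∈ nabla β, ξ y ≤ ξ x}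

section Helpers

variable {N k : ℕ} (β : Fin N → (Fin k → ℝ))

lemma mem_segment_zero (b x : Fin k → ℝ) :
    x ∈ segment ℝ (0 : Fin k → ℝ) b ↔ ∃ t, t ∈ Set.Icc (0:ℝ) 1 ∧ x = t • b := by
  rw [segment_eq_image]
  constructor
  · rintro ⟨t, ht, rfl⟩
    exact ⟨t, ht, by simp⟩
  · rintro ⟨t, ht, rfl⟩
    exact ⟨t, ht, by simp⟩

lemma mem_nabla_iff (x : Fin k → ℝ) :
    x ∈ nabla β ↔ ∃ t : Fin N → ℝ, (∀ i, t i ∈ Set.Icc (0:ℝ) 1) ∧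
      x = (2⁻¹ : ℝ) • ∑ i, t i • β i := by
  unfold nabla
  rw [Set.mem_smul_set]
  constructor
  · rintro ⟨y, hy, rfl⟩
    rw [Set.mem_fintype_sum] at hy
    obtain ⟨g, hg, rfl⟩ := hy
    choose t ht hgt using fun i => (mem_segment_zero (β i) (g i)).1 (hg i)
    exact ⟨t, ht, by rw [Finset.sum_congr rfl fun i _ => hgt i]⟩
  · rintro ⟨t, ht, rfl⟩
    refine ⟨∑ i, t i • β i, ?_, rfl⟩
    rw [Set.mem_fintype_sum]
    exact ⟨fun i => t i • β i, fun i => (mem_segment_zero (β i) _).2 ⟨t i, ht i, rfl⟩, rfl⟩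

lemma mem_nabla_of (t : Fin N → ℝ) (ht : ∀ i, t i ∈ Set.Icc (0:ℝ) 1) :
    (2⁻¹ : ℝ) • ∑ i, t i • β i ∈ nabla β :=
  (mem_nabla_iff β _).2 ⟨t, ht, rfl⟩

lemma sum_zero_of_lineclosed (hβ0 : ∀ i, β i ≠ 0)
    (hqs : ∀ L : Submodule ℝ (Fin k → ℝ), Module.finrank ℝ L = 1 →
      ∑ i ∈ Finset.univ.filter (fun i => β i ∈ L), β i = 0)
    (S : Finset (Fin N))
    (hS : ∀ i ∈ S, ∀ j, β j ∈ Submodule.span ℝ {β i} → j ∈ S) :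
    ∑ i ∈ S, β i = 0 := by
  classical
  set g : Fin N → Submodule ℝ (Fin k → ℝ) := fun i => Submodule.span ℝ {β i} with hg
  rw [← Finset.sum_fiberwise_of_maps_to (g := g) (t := S.image g)
      (fun i hi => Finset.mem_image_of_mem g hi) β]
  refine Finset.sum_eq_zero fun L hL => ?_
  obtain ⟨i0, hi0S, rfl⟩ := Finset.mem_image.1 hL
  have hfilter : S.filter (fun i => g i = g i0) =
      Finset.univ.filter (fun i => β i ∈ g i0) := by
    ext j
    simp only [Finset.mem_filter, Finset.mem_univ, true_and]
    constructor
    · rintro ⟨-, hj⟩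
      rw [← hj]
      exact Submodule.mem_span_singleton_self _
    · intro hj
      refine ⟨hS i0 hi0S j hj, ?_⟩
      obtain ⟨a, ha⟩ := Submodule.mem_span_singleton.1 hj
      have ha0 : a ≠ 0 := by
        rintro rfl
        exact hβ0 j (by simpa using ha.symm)
      rw [hg]
      dsimp only
      rw [← ha]
      exact Submodule.span_singleton_smul_eq (isUnit_iff_ne_zero.2 ha0) _
  rw [hfilter]
  exact hqs _ (finrank_span_singleton (hβ0 i0))

end Helpers

section Cone

variable {N k : ℕ} (β : Fin N → (Fin k → ℝ))

lemma cone_zero (I : Finset (Fin N)) : (0 : Fin k → ℝ) ∈ coneI β I :=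
  ⟨0, fun _ => le_rfl, fun _ _ => rfl, by simp⟩

lemma cone_add {I : Finset (Fin N)} {y z : Fin k → ℝ}
    (hy : y ∈ coneI β I) (hz : z ∈ coneI β I) : y + z ∈ coneI β I := by
  obtain ⟨c, hc0, hcs, rfl⟩ := hy
  obtain ⟨d, hd0, hds, rfl⟩ := hz
  exact ⟨c + d, fun i => add_nonneg (hc0 i) (hd0 i),
    fun i hi => by simp [hcs i hi, hds i hi],
    by rw [← Finset.sum_add_distrib]; exact Finset.sum_congr rfl fun i _ => (add_smul _ _ _).symm⟩

lemma cone_smul {I : Finset (Fin N)} {a : ℝ} (ha : 0 ≤ a) {y : Fin k → ℝ}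
    (hy : y ∈ coneI β I) : a • y ∈ coneI β I := by
  obtain ⟨c, hc0, hcs, rfl⟩ := hy
  exact ⟨fun i => a * c i, fun i => mul_nonneg ha (hc0 i),
    fun i hi => by simp [hcs i hi],
    by rw [Finset.smul_sum]; exact Finset.sum_congr rfl fun i _ => (smul_smul _ _ _)⟩

lemma cone_mono {I J : Finset (Fin N)} (h : I ⊆ J) :
    coneI β I ⊆ coneI β J := by
  rintro y ⟨c, hc0, hcs, rfl⟩
  exact ⟨c, hc0, fun i hi => hcs i (fun hiI => hi (h hiI)), rfl⟩

lemma beta_mem_cone {I : Finset (Fin N)} {i : Fin N} (hi : i ∈ I) :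
    β i ∈ coneI β I := by
  refine ⟨fun j => if j = i then 1 else 0, fun j => by positivity,
    fun j hj => if_neg (fun h : j = i => hj (h ▸ hi)), ?_⟩
  simp [ite_smul]

lemma sum_beta_mem_cone {I : Finset (Fin N)} {S : Finset (Fin N)} (h : S ⊆ I) :
    ∑ i ∈ S, β i ∈ coneI β I := by
  classical
  induction S using Finset.induction_on with
  | empty => simpa using cone_zero β I
  | @insert a s hx ih =>
    rw [Finset.sum_insert hx]
    have h' := Finset.insert_subset_iff.1 h
    exact cone_add β (beta_mem_cone β h'.1) (ih h'.2)

end Cone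

section Span

variable {N k : ℕ} (β : Fin N → (Fin k → ℝ)) (ξ : (Fin k → ℝ) →ₗ[ℝ] ℝ)

lemma neg_beta_mem_cone (hβ0 : ∀ i, β i ≠ 0)
    (hqs : ∀ L : Submodule ℝ (Fin k → ℝ), Module.finrank ℝ L = 1 →
      ∑ i ∈ Finset.univ.filter (fun i => β i ∈ L), β i = 0)
    {i : Fin N} (hi : ξ (β i) = 0) :
    -β i ∈ coneI β (Finset.univ.filter fun j => ξ (β j) = 0) := by
  classical
  set L : Submodule ℝ (Fin k → ℝ) := Submodule.span ℝ {β i} with hL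
  set S : Finset (Fin N) := Finset.univ.filter (fun j => β j ∈ L) with hS
  have hiS : i ∈ S := by
    simp only [hS, Finset.mem_filter, Finset.mem_univ, true_and]
    exact Submodule.mem_span_singleton_self _
  have hsum : ∑ j ∈ S, β j = 0 := hqs L (finrank_span_singleton (hβ0 i))
  have herase : ∑ j ∈ S.erase i, β j = -β i := by
    have := Finset.sum_erase_add S β hiS
    rw [hsum] at this
    have := eq_neg_of_add_eq_zero_left this
    exact this
  rw [← herase]
  refine sum_beta_mem_cone β ?_
  intro j hj
  have hjL : β j ∈ L := by
    have := Finset.mem_of_mem_erase hj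
    simpa [hS] using this
  obtain ⟨a, ha⟩ := Submodule.mem_span_singleton.1 hjL
  simp only [Finset.mem_filter, Finset.mem_univ, true_and]
  rw [← ha, map_smul, hi, smul_eq_mul, mul_zero]

end Span

section Span2

variable {N k : ℕ} (β : Fin N → (Fin k → ℝ)) (ξ : (Fin k → ℝ) →ₗ[ℝ] ℝ)

lemma span_sub_cone (hβ0 : ∀ i, β i ≠ 0)
    (hqs : ∀ L : Submodule ℝ (Fin k → ℝ), Module.finrank ℝ L = 1 →
      ∑ i ∈ Finset.univ.filter (fun i => β i ∈ L), β i = 0) :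
    (Submodule.span ℝ (β '' ↑(Finset.univ.filter fun j => ξ (β j) = 0)) : Set (Fin k → ℝ))
      ⊆ coneI β (Finset.univ.filter fun j => ξ (β j) = 0) := by
  classical
  set Zf := Finset.univ.filter fun j => ξ (β j) = 0 with hZf
  set M : Submodule ℝ (Fin k → ℝ) :=
    { carrier := {y | y ∈ coneI β Zf ∧ -y ∈ coneI β Zf}
      add_mem' := by
        rintro a b ⟨ha1, ha2⟩ ⟨hb1, hb2⟩
        exact ⟨cone_add β ha1 hb1, by rw [neg_add]; exact cone_add β ha2 hb2⟩
      zero_mem' := ⟨cone_zero β _, by rw [neg_zero]; exact cone_zero β _⟩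
      smul_mem' := by
        rintro a y ⟨hy1, hy2⟩
        rcases le_or_gt 0 a with h | h
        · exact ⟨cone_smul β h hy1, by rw [← smul_neg]; exact cone_smul β h hy2⟩
        · have h' : (0:ℝ) ≤ -a := by linarith
          constructor
          · have : a • y = (-a) • (-y) := by rw [neg_smul, smul_neg, neg_neg]
            rw [this]; exact cone_smul β h' hy2
          · have : -(a • y) = (-a) • y := by rw [neg_smul]
            rw [this]; exact cone_smul β h' hy1 } with hM
  have hle : Submodule.span ℝ (β '' ↑Zf) ≤ M := by
    rw [Submodule.span_le]
    rintro y ⟨i, hi, rfl⟩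
    have hi' : i ∈ Zf := by exact_mod_cast hi
    have hξi : ξ (β i) = 0 := by simpa [hZf] using hi'
    exact ⟨beta_mem_cone β hi', neg_beta_mem_cone β ξ hβ0 hqs hξi⟩
  intro y hy
  exact (hle hy).1

end Span2

/-- **Theorem (combinatorial core of the singular-support theorem).**
Assume quasi-symmetry and `μ(ℤ^N) = ℤ^k`.  For a nonzero functional `ξ`,
`δ ∈ ℝ^k` and `v ∈ ℤ^k`, there exist `I, J` with `δ − v ∈ A_I ∩ A_J`,
`{ξ(β_i) < 0} ⊆ I ⊆ {ξ(β_i) ≤ 0}` and `J ⊆ {ξ(β_i) ≥ 0}`, iff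
`δ ∈ v + Aff(F_ξ)`. -/
theorem singular_support_combinatorial_core
    {N k : ℕ} (hk : 1 ≤ k) (hNk : k ≤ N)
    (μ : (Fin N → ℝ) →ₗ[ℝ] (Fin k → ℝ))
    (hsurj : Function.Surjective μ)
    (hlat : ∀ w : Fin N → ℤ, ∃ u : Fin k → ℤ,
      μ (fun i => (w i : ℝ)) = fun j => (u j : ℝ))
    (hlat' : ∀ u : Fin k → ℤ, ∃ w : Fin N → ℤ,
      μ (fun i => (w i : ℝ)) = fun j => (u j : ℝ))
    (β : Fin N → (Fin k → ℝ)) (hβ : ∀ i, β i = μ (Pi.single i 1))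
    (hβ0 : ∀ i, β i ≠ 0)
    (hspan : Submodule.span ℝ (Set.range β) = ⊤)
    (hqs : ∀ L : Submodule ℝ (Fin k → ℝ), Module.finrank ℝ L = 1 →
      ∑ i ∈ Finset.univ.filter (fun i => β i ∈ L), β i = 0)
    (ξ : (Fin k → ℝ) →ₗ[ℝ] ℝ) (hξ : ξ ≠ 0)
    (δ : Fin k → ℝ) (v : Fin k → ℤ) :
    (∃ I J : Finset (Fin N),
        (δ - fun j => (v j : ℝ)) ∈ AI β I ∧
        (δ - fun j => (v j : ℝ)) ∈ AI β J ∧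
        (∀ i, ξ (β i) < 0 → i ∈ I) ∧ (∀ i ∈ I, ξ (β i) ≤ 0) ∧
        (∀ i ∈ J, 0 ≤ ξ (β i))) ↔
      (δ - fun j => (v j : ℝ)) ∈ affineSpan ℝ (exposedFace β ξ) := by
  classical
  set x := δ - fun j => (v j : ℝ) with hxdef
  set Zf := Finset.univ.filter (fun i => ξ (β i) = 0) with hZfdef
  set P := Finset.univ.filter (fun i => 0 < ξ (β i)) with hPdef
  set Mg := Finset.univ.filter (fun i => ξ (β i) < 0) with hMgdef
  set sP := ∑ i ∈ P, β i with hsPdef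
  set p := (2⁻¹ : ℝ) • sP with hpdef
  set V := Submodule.span ℝ (β '' ↑Zf) with hVdef
  set m := ∑ i ∈ P, ξ (β i) with hmdef
  -- basic sums
  have hZsum : ∑ i ∈ Zf, β i = 0 := by
    refine sum_zero_of_lineclosed β hβ0 hqs Zf ?_
    intro i hi j hj
    obtain ⟨a, ha⟩ := Submodule.mem_span_singleton.1 hj
    simp only [hZfdef, Finset.mem_filter, Finset.mem_univ, true_and] at hi ⊢
    rw [← ha, map_smul, hi, smul_eq_mul, mul_zero]
  have hTsum : ∑ i : Fin N, β i = 0 :=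
    sum_zero_of_lineclosed β hβ0 hqs Finset.univ (fun _ _ j _ => Finset.mem_univ j)
  have hMgsum : ∑ i ∈ Mg, β i = -sP := by
    have h1 := Finset.sum_filter_add_sum_filter_not Finset.univ (fun i => ξ (β i) = 0) β
    rw [← hZfdef, hZsum, hTsum, zero_add] at h1
    have h2 := Finset.sum_filter_add_sum_filter_not
      (Finset.univ.filter fun i => ¬ ξ (β i) = 0) (fun i => 0 < ξ (β i)) β
    have hPP : (Finset.univ.filter fun i => ¬ ξ (β i) = 0).filter (fun i => 0 < ξ (β i)) = P := by
      rw [Finset.filter_filter, hPdef]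
      ext i
      simp only [Finset.mem_filter, Finset.mem_univ, true_and]
      exact ⟨fun h => h.2, fun h => ⟨ne_of_gt h, h⟩⟩
    have hMM : (Finset.univ.filter fun i => ¬ ξ (β i) = 0).filter
        (fun i => ¬ 0 < ξ (β i)) = Mg := by
      rw [Finset.filter_filter, hMgdef]
      ext i
      simp only [Finset.mem_filter, Finset.mem_univ, true_and]
      constructor
      · rintro ⟨h1', h2'⟩
        exact lt_of_le_of_ne (not_lt.1 h2') h1'
      · intro h
        exact ⟨ne_of_lt h, not_lt.2 (le_of_lt h)⟩
    rw [hPP, hMM, h1, ← hsPdef] at h2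
    exact eq_neg_of_add_eq_zero_right h2
  have hξsP : ξ sP = m := by rw [hsPdef, map_sum, hmdef]
  have hξp : ξ p = 2⁻¹ * m := by rw [hpdef, map_smul, smul_eq_mul, hξsP]
  -- ξ on nabla elements
  have hξval : ∀ t : Fin N → ℝ,
      ξ ((2⁻¹ : ℝ) • ∑ i, t i • β i) = 2⁻¹ * ∑ i, t i * ξ (β i) := by
    intro t
    rw [map_smul, map_sum, smul_eq_mul]
    congr 1
    exact Finset.sum_congr rfl fun i _ => by rw [map_smul, smul_eq_mul]
  have hub : ∀ y ∈ nabla β, ξ y ≤ 2⁻¹ * m := by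
    intro y hy
    obtain ⟨t, ht, rfl⟩ := (mem_nabla_iff β y).1 hy
    rw [hξval]
    have hsum : ∑ i, t i * ξ (β i) ≤ ∑ i, (if 0 < ξ (β i) then ξ (β i) else 0) := by
      refine Finset.sum_le_sum fun i _ => ?_
      by_cases h : 0 < ξ (β i)
      · rw [if_pos h]
        calc t i * ξ (β i) ≤ 1 * ξ (β i) :=
              mul_le_mul_of_nonneg_right (ht i).2 h.le
          _ = ξ (β i) := one_mul _
      · rw [if_neg h]
        exact mul_nonpos_of_nonneg_of_nonpos (ht i).1 (not_lt.1 h)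
    rw [← Finset.sum_filter, ← hPdef, ← hmdef] at hsum
    nlinarith [hsum]
  have hlb : ∀ y ∈ nabla β, -(2⁻¹ * m) ≤ ξ y := by
    intro y hy
    obtain ⟨t, ht, rfl⟩ := (mem_nabla_iff β y).1 hy
    rw [hξval]
    have hsum : ∑ i, (if ξ (β i) < 0 then ξ (β i) else 0) ≤ ∑ i, t i * ξ (β i) := by
      refine Finset.sum_le_sum fun i _ => ?_
      by_cases h : ξ (β i) < 0
      · rw [if_pos h]
        nlinarith [(ht i).1, (ht i).2]
      · rw [if_neg h]
        exact mul_nonneg (ht i).1 (not_lt.1 h)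
    rw [← Finset.sum_filter, ← hMgdef] at hsum
    have : ∑ i ∈ Mg, ξ (β i) = -m := by
      rw [← map_sum, hMgsum, map_neg, hξsP]
    rw [this] at hsum
    nlinarith [hsum]
  -- forcing
  have hfaceV : ∀ y ∈ nabla β, ξ y = 2⁻¹ * m → y - p ∈ V := by
    intro y hy hval
    obtain ⟨t, ht, rfl⟩ := (mem_nabla_iff β y).1 hy
    rw [hξval] at hval
    have hval' : ∑ i, t i * ξ (β i) = ∑ i, (if 0 < ξ (β i) then ξ (β i) else 0) := by
      rw [← Finset.sum_filter, ← hPdef, ← hmdef]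
      exact mul_left_cancel₀ (by norm_num : (2⁻¹ : ℝ) ≠ 0) hval
    have hle : ∀ i ∈ Finset.univ, t i * ξ (β i) ≤ (if 0 < ξ (β i) then ξ (β i) else 0) := by
      intro i _
      by_cases h : 0 < ξ (β i)
      · rw [if_pos h]
        nlinarith [(ht i).1, (ht i).2]
      · rw [if_neg h]
        exact mul_nonpos_of_nonneg_of_nonpos (ht i).1 (not_lt.1 h)
    have heq := (Finset.sum_eq_sum_iff_of_le hle).1 hval'
    have hsplit : ∑ i, (if 0 < ξ (β i) then β i else 0) = sP := by
      rw [hsPdef, hPdef, Finset.sum_filter]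
    have hrw : (2⁻¹ : ℝ) • ∑ i, t i • β i - p =
        (2⁻¹ : ℝ) • ∑ i, (t i • β i - (if 0 < ξ (β i) then β i else 0)) := by
      rw [Finset.sum_sub_distrib, smul_sub, hsplit, hpdef]
    rw [hrw]
    refine Submodule.smul_mem _ _ (Submodule.sum_mem _ fun i _ => ?_)
    by_cases h : 0 < ξ (β i)
    · have h1 := heq i (Finset.mem_univ i)
      rw [if_pos h] at h1
      have ht1 : t i = 1 := by
        have := mul_right_cancel₀ (ne_of_gt h) (h1.trans (one_mul _).symm)
        exact this
      rw [if_pos h, ht1, one_smul, sub_self]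
      exact Submodule.zero_mem _
    · by_cases h2 : ξ (β i) < 0
      · have h1 := heq i (Finset.mem_univ i)
        rw [if_neg h] at h1
        have ht0 : t i = 0 := by
          rcases mul_eq_zero.1 h1 with h' | h'
          · exact h'
          · exact absurd h' (ne_of_lt h2)
        rw [if_neg h, ht0, zero_smul, sub_zero]
        exact Submodule.zero_mem _
      · have hξ0 : ξ (β i) = 0 := le_antisymm (not_lt.1 h) (not_lt.1 h2)
        rw [if_neg h, sub_zero]
        refine Submodule.smul_mem _ _ (Submodule.subset_span ⟨i, ?_, rfl⟩)
        simp [hZfdef, hξ0]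
  -- nabla memberships
  have hsumP : ∑ i, (if 0 < ξ (β i) then (1:ℝ) else 0) • β i = sP := by
    rw [hsPdef, hPdef, Finset.sum_filter]
    exact Finset.sum_congr rfl fun i _ => by split <;> simp
  have hpN : p ∈ nabla β := by
    rw [hpdef, ← hsumP]
    exact mem_nabla_of β _ fun i => by
      split <;> constructor <;> norm_num
  have hnegpN : -p ∈ nabla β := by
    have hsumM : ∑ i, (if ξ (β i) < 0 then (1:ℝ) else 0) • β i = -sP := by
      rw [← hMgsum, hMgdef, Finset.sum_filter]
      exact Finset.sum_congr rfl fun i _ => by split <;> simp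
    have : -p = (2⁻¹ : ℝ) • ∑ i, (if ξ (β i) < 0 then (1:ℝ) else 0) • β i := by
      rw [hsumM, hpdef, smul_neg]
    rw [this]
    exact mem_nabla_of β _ fun i => by
      split <;> constructor <;> norm_num
  have hqN : ∀ i0 ∈ Zf, p + (2⁻¹ : ℝ) • β i0 ∈ nabla β := by
    intro i0 hi0
    have hξ0 : ξ (β i0) = 0 := by simpa [hZfdef] using hi0
    set t : Fin N → ℝ :=
      fun i => (if 0 < ξ (β i) then (1:ℝ) else 0) + (if i = i0 then 1 else 0) with htdef
    have ht : ∀ i, t i ∈ Set.Icc (0:ℝ) 1 := by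
      intro i
      by_cases h : i = i0
      · subst h
        rw [htdef]
        simp [hξ0]
      · rw [htdef]
        simp only [if_neg h, add_zero]
        split <;> constructor <;> norm_num
    have hsum : ∑ i, t i • β i = sP + β i0 := by
      rw [htdef]
      simp only [add_smul]
      rw [Finset.sum_add_distrib, hsumP]
      congr 1
      rw [Finset.sum_congr rfl fun i _ => (ite_smul _ _ _ _ : _ = _)]
      simp
    have : p + (2⁻¹ : ℝ) • β i0 = (2⁻¹ : ℝ) • ∑ i, t i • β i := by
      rw [hsum, smul_add, hpdef]
    rw [this]
    exact mem_nabla_of β t ht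
  have hpF : p ∈ exposedFace β ξ := ⟨hpN, fun y hy => by rw [hξp]; exact hub y hy⟩
  have hqF : ∀ i0 ∈ Zf, p + (2⁻¹ : ℝ) • β i0 ∈ exposedFace β ξ := by
    intro i0 hi0
    have hξ0 : ξ (β i0) = 0 := by
      simpa [hZfdef] using hi0
    refine ⟨hqN i0 hi0, fun y hy => ?_⟩
    rw [map_add, hξp, map_smul, hξ0, smul_zero, add_zero]
    exact hub y hy
  have hdir : V ≤ (affineSpan ℝ (exposedFace β ξ)).direction := by
    rw [hVdef, Submodule.span_le]
    rintro y ⟨i0, hi0, rfl⟩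
    have hi0' : i0 ∈ Zf := by exact_mod_cast hi0
    have h2 : (p + (2⁻¹ : ℝ) • β i0) -ᵥ p ∈ (affineSpan ℝ (exposedFace β ξ)).direction :=
      AffineSubspace.vsub_mem_direction (subset_affineSpan ℝ _ (hqF i0 hi0'))
        (subset_affineSpan ℝ _ hpF)
    have h3 : (p + (2⁻¹ : ℝ) • β i0) -ᵥ p = (2⁻¹ : ℝ) • β i0 := by
      rw [vsub_eq_sub]; abel
    rw [h3] at h2
    have := Submodule.smul_mem _ (2 : ℝ) h2
    rwa [smul_smul, show (2 : ℝ) * 2⁻¹ = 1 by norm_num, one_smul] at this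
  have haff_of : ∀ y : Fin k → ℝ, y - p ∈ V → y ∈ affineSpan ℝ (exposedFace β ξ) := by
    intro y hy
    have := AffineSubspace.vadd_mem_of_mem_direction (hdir hy)
      (subset_affineSpan ℝ _ hpF)
    rwa [vadd_eq_add, sub_add_cancel] at this
  have haff_to : ∀ y : Fin k → ℝ, y ∈ affineSpan ℝ (exposedFace β ξ) → y - p ∈ V := by
    intro y hy
    have hQ : affineSpan ℝ (exposedFace β ξ) ≤ AffineSubspace.mk' p V := by
      rw [affineSpan_le]
      intro z hz
      rw [SetLike.mem_coe, AffineSubspace.mem_mk', vsub_eq_sub]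
      refine hfaceV z hz.1 (le_antisymm (hub z hz.1) ?_)
      rw [← hξp]
      exact hz.2 p hpN
    have h := hQ hy
    rw [AffineSubspace.mem_mk', vsub_eq_sub] at h
    exact h
  constructor
  · rintro ⟨I, J, hI, hJ, hIneg, hIle, hJge⟩
    obtain ⟨c, hc, n, hn, hxI⟩ := hI
    obtain ⟨c', hc', n', hn', hxJ⟩ := hJ
    obtain ⟨cc, hcc0, hccs, hceq⟩ := hc
    obtain ⟨cc', hcc'0, hcc's, hceq'⟩ := hc'
    have hξc : ξ c ≤ 0 := by
      rw [hceq, map_sum]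
      refine Finset.sum_nonpos fun i _ => ?_
      rw [map_smul, smul_eq_mul]
      by_cases h : i ∈ I
      · exact mul_nonpos_of_nonneg_of_nonpos (hcc0 i) (hIle i h)
      · rw [hccs i h, zero_mul]
    have hξc' : 0 ≤ ξ c' := by
      rw [hceq', map_sum]
      refine Finset.sum_nonneg fun i _ => ?_
      rw [map_smul, smul_eq_mul]
      by_cases h : i ∈ J
      · exact mul_nonneg (hcc'0 i) (hJge i h)
      · rw [hcc's i h, zero_mul]
    have hMgI : Mg ⊆ I := fun i hi => hIneg i (by simpa [hMgdef] using hi)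
    have hIsum : ∑ i ∈ I, ξ (β i) ≤ -m := by
      have h1 : ∑ i ∈ Mg, -ξ (β i) ≤ ∑ i ∈ I, -ξ (β i) :=
        Finset.sum_le_sum_of_subset_of_nonneg hMgI
          (fun i hi _ => neg_nonneg.2 (hIle i hi))
      have h2 : ∑ i ∈ Mg, ξ (β i) = -m := by
        rw [← map_sum, hMgsum, map_neg, hξsP]
      rw [Finset.sum_neg_distrib, Finset.sum_neg_distrib, h2] at h1
      linarith
    have hξxI : ξ x = -(∑ i ∈ I, ξ (β i)) - ξ c + ξ n := by
      rw [hxI, map_add, map_sub, map_neg, map_sum]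
    have hξxJ : ξ x = -(∑ i ∈ J, ξ (β i)) - ξ c' + ξ n' := by
      rw [hxJ, map_add, map_sub, map_neg, map_sum]
    have hJsum : 0 ≤ ∑ i ∈ J, ξ (β i) := Finset.sum_nonneg hJge
    have hnle := hub n' hn'
    have hnge := hlb n hn
    have hJ0 : ∑ i ∈ J, ξ (β i) = 0 := by linarith
    have hc'0 : ξ c' = 0 := by linarith
    have hn'm : ξ n' = 2⁻¹ * m := by linarith
    have hJZ : ∀ j ∈ J, ξ (β j) = 0 := fun j hj =>
      (Finset.sum_eq_zero_iff_of_nonneg hJge).1 hJ0 j hj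
    have hβJV : ∑ i ∈ J, β i ∈ V :=
      Submodule.sum_mem _ fun j hj =>
        Submodule.subset_span ⟨j, by simp [hZfdef, hJZ j hj], rfl⟩
    have hc'V : c' ∈ V := by
      rw [hceq']
      refine Submodule.sum_mem _ fun i _ => ?_
      by_cases h : i ∈ J
      · exact Submodule.smul_mem _ _
          (Submodule.subset_span ⟨i, by simp [hZfdef, hJZ i h], rfl⟩)
      · rw [hcc's i h, zero_smul]
        exact Submodule.zero_mem _
    have hn'V : n' - p ∈ V := hfaceV n' hn' hn'm
    have hxpV : x - p ∈ V := by
      have hxp : x - p = -(∑ i ∈ J, β i) + -c' + (n' - p) := by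
        rw [hxJ]; abel
      rw [hxp]
      exact Submodule.add_mem _ (Submodule.add_mem _
        (Submodule.neg_mem _ hβJV) (Submodule.neg_mem _ hc'V)) hn'V
    exact haff_of x hxpV
  · intro hx
    have hxp : x - p ∈ V := haff_to x hx
    have hcone : p - x ∈ coneI β Zf := by
      have hpxV : p - x ∈ V := by
        have := Submodule.neg_mem _ hxp
        rwa [neg_sub] at this
      exact span_sub_cone β ξ hβ0 hqs hpxV
    refine ⟨Finset.univ.filter (fun i => ξ (β i) ≤ 0), Zf, ?_, ?_, ?_, ?_, ?_⟩
    · refine ⟨p - x, cone_mono β ?_ hcone, -p, hnegpN, ?_⟩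
      · intro i hi
        simp only [hZfdef, Finset.mem_filter, Finset.mem_univ, true_and] at hi ⊢
        exact le_of_eq hi
      · have hIsum : ∑ i ∈ Finset.univ.filter (fun i => ξ (β i) ≤ 0), β i = -sP := by
          have h2 := Finset.sum_filter_add_sum_filter_not
            (Finset.univ.filter fun i => ξ (β i) ≤ 0) (fun i => ξ (β i) < 0) β
          have e1 : (Finset.univ.filter fun i => ξ (β i) ≤ 0).filter
              (fun i => ξ (β i) < 0) = Mg := by
            rw [Finset.filter_filter, hMgdef]
            ext i
            simp only [Finset.mem_filter, Finset.mem_univ, true_and]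
            exact ⟨fun h => h.2, fun h => ⟨le_of_lt h, h⟩⟩
          have e2 : (Finset.univ.filter fun i => ξ (β i) ≤ 0).filter
              (fun i => ¬ ξ (β i) < 0) = Zf := by
            rw [Finset.filter_filter, hZfdef]
            ext i
            simp only [Finset.mem_filter, Finset.mem_univ, true_and]
            exact ⟨fun h => le_antisymm h.1 (not_lt.1 h.2),
              fun h => ⟨le_of_eq h, by rw [h]; exact lt_irrefl 0⟩⟩
          rw [e1, e2, hMgsum, hZsum, add_zero] at h2
          exact h2.symm
        rw [hIsum, hpdef]
        module
    · refine ⟨p - x, hcone, p, hpN, ?_⟩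
      rw [hZsum, neg_zero]
      abel
    · intro i hi
      simp only [Finset.mem_filter, Finset.mem_univ, true_and]
      exact le_of_lt hi
    · intro i hi
      simp only [Finset.mem_filter, Finset.mem_univ, true_and] at hi
      exact hi
    · intro i hi
      have h0 : ξ (β i) = 0 := by simpa [hZfdef] using hi
      rw [h0]
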